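/- arXiv:1907.13004 — 4 statements merged into one kernel-verified Lean document; each statement's English description precedes it below -/
import Mathlib

section
/- Let n ≥ 1, let μ ∈ ℝ, let h ∈ ℝⁿ, let W ∈ ℝ^{n×n} be a symmetric matrix, and let σ : ℝ → ℝ be continuously differentiable. If there exists a twice continuously differentiable function J : ℝⁿ → ℝ such that ∇J(v) = μ v − W σ(v) − h for every v ∈ ℝⁿ (equivalently, the Wilson–Cowan vector field F(v) = −μ v + W σ(v) + h satisfies F = −∇J), then either W is a diagonal matrix, or σ is an affine function, i.e. there exist α, β ∈ ℝ with σ(x) = α x + β for all x ∈ ℝ. -/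
section aux
variable {n : ℕ}

noncomputable abbrev ee (i : Fin n) : EuclideanSpace ℝ (Fin n) := EuclideanSpace.single i 1

lemma grad_comp_eq_fderiv (J : EuclideanSpace ℝ (Fin n) → ℝ) (v : EuclideanSpace ℝ (Fin n))
    (i : Fin n) : gradient J v i = fderiv ℝ J v (ee i) := by
  have : fderiv ℝ J v = InnerProductSpace.toDual ℝ _ (gradient J v) := by simp [gradient]
  rw [this]
  rw [InnerProductSpace.toDual_apply_apply, EuclideanSpace.inner_single_right]
  simp

/-- the key identity from symmetry of second derivatives -/
lemma key (μ : ℝ) (h : Fin n → ℝ) (W : Matrix (Fin n) (Fin n) ℝ)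
    (σ : ℝ → ℝ) (hσ : ContDiff ℝ 1 σ)
    (J : EuclideanSpace ℝ (Fin n) → ℝ) (hJ : ContDiff ℝ 2 J)
    (hgrad : ∀ (v : EuclideanSpace ℝ (Fin n)) (i : Fin n),
      gradient J v i = μ * v i - (∑ k, W i k * σ (v k)) - h i)
    (v : EuclideanSpace ℝ (Fin n)) (i j : Fin n) :
    (if i = j then μ else 0) - W i j * deriv σ (v j)
      = (if j = i then μ else 0) - W j i * deriv σ (v i) := by
  -- second derivative
  set f'' := fderiv ℝ (fderiv ℝ J) v with hf''
  have hdf : DifferentiableAt ℝ (fderiv ℝ J) v := by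
    have := (hJ.fderiv_right (m := 1) (by norm_num)).differentiable one_ne_zero
    exact this v
  have hsymm : ∀ a b, f'' a b = f'' b a := fun a b =>
    (hJ.contDiffAt.isSymmSndFDerivAt (by norm_num)).eq a b
  -- compute f'' (ee b) (ee a) explicitly for any a b
  have hcomp : ∀ a b : Fin n, f'' (ee b) (ee a)
      = (if a = b then μ else 0) - W a b * deriv σ (v b) := by
    intro a b
    -- g := component a of gradient
    set g : EuclideanSpace ℝ (Fin n) → ℝ := fun u => fderiv ℝ J u (ee a) with hg
    have hgF : HasFDerivAt g ((ContinuousLinearMap.apply ℝ ℝ (ee a)).comp f'') v :=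
      (ContinuousLinearMap.apply ℝ ℝ (ee a)).hasFDerivAt.comp v hdf.hasFDerivAt
    -- line through v in direction ee b
    have hline : HasDerivAt (fun t : ℝ => v + t • ee b) (ee b) 0 := by
      simpa using ((hasDerivAt_id (0:ℝ)).smul_const (ee b)).const_add v
    have hgF' : HasFDerivAt g ((ContinuousLinearMap.apply ℝ ℝ (ee a)).comp f'')
        (v + (0:ℝ) • ee b) := by simpa using hgF
    have h1 : HasDerivAt (fun t : ℝ => g (v + t • ee b)) (f'' (ee b) (ee a)) 0 := by
      have := hgF'.comp_hasDerivAt 0 hline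
      simp only [ContinuousLinearMap.comp_apply, ContinuousLinearMap.apply_apply] at this
      exact this
    -- explicit formula for g along the line
    have hgu : ∀ u : EuclideanSpace ℝ (Fin n), g u = μ * u a - (∑ k, W a k * σ (u k)) - h a := by
      intro u; rw [hg]; simp only
      rw [← grad_comp_eq_fderiv]; exact hgrad u a
    have happ : ∀ (t : ℝ) (k : Fin n), (v + t • ee b) k = v k + t * (if k = b then 1 else 0) := by
      intro t k
      simp [ee, EuclideanSpace.single_apply, PiLp.add_apply, PiLp.smul_apply, smul_eq_mul]
    have h2 : HasDerivAt (fun t : ℝ => g (v + t • ee b))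
        ((if a = b then μ else 0) - W a b * deriv σ (v b)) 0 := by
      have hrw : (fun t : ℝ => g (v + t • ee b))
          = fun t : ℝ => μ * (v a + t * (if a = b then 1 else 0))
              - (∑ k, W a k * σ (v k + t * (if k = b then 1 else 0))) - h a := by
        funext t; rw [hgu]; simp_rw [happ]
      rw [hrw]
      have hterm : ∀ (k : Fin n) (cb : ℝ), HasDerivAt
          (fun t : ℝ => W a k * σ (v k + t * cb))
          (W a k * (deriv σ (v k) * cb)) 0 := by
        intro k cb
        have hl : HasDerivAt (fun t : ℝ => v k + t * cb) cb 0 := by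
          simpa using ((hasDerivAt_id (0:ℝ)).mul_const cb).const_add (v k)
        have hσd : HasDerivAt σ (deriv σ (v k)) (v k + 0 * cb) := by
          simpa using ((hσ.differentiable one_ne_zero) (v k)).hasDerivAt
        exact (hσd.comp 0 hl).const_mul _
      have hsum : HasDerivAt
          (fun t : ℝ => ∑ k, W a k * σ (v k + t * (if k = b then 1 else 0)))
          (∑ k, W a k * (deriv σ (v k) * (if k = b then 1 else 0))) 0 :=
        HasDerivAt.fun_sum fun k _ => hterm k _
      have hfirst' : ∀ cb : ℝ, HasDerivAt (fun t : ℝ => μ * (v a + t * cb)) (μ * cb) 0 := by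
        intro cb
        simpa using (((hasDerivAt_id (0:ℝ)).mul_const cb).const_add (v a)).const_mul μ
      have hfirst := hfirst' (if a = b then 1 else 0)
      have := (hfirst.sub hsum).sub_const (h a)
      refine this.congr_deriv ?_
      rw [Finset.sum_eq_single b]
      · by_cases hab : a = b <;> simp [hab]
      · intro k _ hk; simp [hk]
      · simp
    exact (h1.unique h2) ▸ rfl
  have := hcomp i j
  rw [hsymm (ee j) (ee i), hcomp j i] at this
  exact this.symm
end aux

/-- **Non-variational nature of the Wilson–Cowan equations.**
If the finite-dimensional Wilson–Cowan vector field
`F v = -μ • v + W * σ(v) + h` (with `W` symmetric and `σ ∈ C¹`) is the negative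
gradient of a twice continuously differentiable functional `J : ℝⁿ → ℝ`, then
either `W` is diagonal or `σ` is affine. -/
theorem wilsonCowan_variational_implies_diag_or_affine
    (n : ℕ) (hn : 1 ≤ n) (μ : ℝ) (h : Fin n → ℝ)
    (W : Matrix (Fin n) (Fin n) ℝ) (hW : W.IsSymm)
    (σ : ℝ → ℝ) (hσ : ContDiff ℝ 1 σ)
    (J : EuclideanSpace ℝ (Fin n) → ℝ) (hJ : ContDiff ℝ 2 J)
    (hgrad : ∀ (v : EuclideanSpace ℝ (Fin n)) (i : Fin n),
      gradient J v i = μ * v i - (∑ k, W i k * σ (v k)) - h i) :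
    W.IsDiag ∨ ∃ α β : ℝ, ∀ x : ℝ, σ x = α * x + β := by
  by_cases hdiag : W.IsDiag
  · exact Or.inl hdiag
  right
  have hdiag' : ∃ i j, i ≠ j ∧ W i j ≠ 0 := by
    by_contra hc
    push_neg at hc
    exact hdiag fun i j hij => hc i j hij
  obtain ⟨i, j, hij, hWij⟩ := hdiag'
  -- deriv σ is constant
  have hWji : W j i = W i j := by
    have := congrFun (congrFun hW.eq j) i
    simpa [Matrix.transpose_apply] using this.symm
  have hconst : ∀ x y : ℝ, deriv σ x = deriv σ y := by
    intro x y
    set v : EuclideanSpace ℝ (Fin n) := WithLp.toLp 2 (fun k => if k = i then y else x) with hv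
    have hk := key μ h W σ hσ J hJ hgrad v i j
    have hvj : v j = x := by simp [hv, hij.symm]
    have hvi : v i = y := by simp [hv]
    rw [hvj, hvi, hWji] at hk
    simp only [if_neg hij, if_neg (Ne.symm hij), zero_sub, neg_inj] at hk
    exact mul_left_cancel₀ hWij hk
  set c := deriv σ 0 with hc
  refine ⟨c, σ 0, fun x => ?_⟩
  have hdiff : Differentiable ℝ fun t => σ t - c * t :=
    (hσ.differentiable one_ne_zero).sub (differentiable_id.const_mul c)
  have hzero : ∀ t, deriv (fun t => σ t - c * t) t = 0 := by
    intro t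
    have h1 : HasDerivAt (fun t => σ t - c * t) (deriv σ t - c) t := by
      exact (((hσ.differentiable one_ne_zero) t).hasDerivAt).sub
        (by simpa using (hasDerivAt_id t).const_mul c)
    rw [h1.deriv, hconst t 0, ← hc, sub_self]
  have := is_const_of_deriv_eq_zero hdiff hzero x 0
  simp only [mul_zero, sub_zero] at this
  linarith [this]
end

section
/- Let n ≥ 2, let W ∈ ℝ^{n×n} be a symmetric matrix which is not diagonal, and let σ : ℝ → ℝ be differentiable. Suppose that for every v ∈ ℝⁿ the matrix with entries W_{ij} σ′(vⱼ) is symmetric, i.e. W_{ij} σ′(vⱼ) = W_{ji} σ′(vᵢ) for all i, j and all v ∈ ℝⁿ. Then σ′ is a constant function on ℝ; consequently σ is affine, i.e. there exist α, β ∈ ℝ with σ(x) = α x + β for all x ∈ ℝ. -/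
/-- **Symmetry of the Hessian forces an affine nonlinearity.**
If `n ≥ 2`, `W` is symmetric and not diagonal, `σ` is differentiable, and the
matrix `(W i j * σ'(vⱼ))ᵢⱼ` is symmetric for every `v ∈ ℝⁿ`, then `σ'` is
constant and `σ` is affine. -/
theorem symm_hessian_nondiag_implies_affine
    (n : ℕ) (hn : 2 ≤ n)
    (W : Matrix (Fin n) (Fin n) ℝ) (hW : W.IsSymm) (hWd : ¬ W.IsDiag)
    (σ : ℝ → ℝ) (hσ : Differentiable ℝ σ)
    (hsym : ∀ (v : Fin n → ℝ) (i j : Fin n),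
      W i j * deriv σ (v j) = W j i * deriv σ (v i)) :
    (∃ c : ℝ, ∀ x : ℝ, deriv σ x = c) ∧
      ∃ α β : ℝ, ∀ x : ℝ, σ x = α * x + β := by
  obtain ⟨i, j, hij, hWij⟩ : ∃ i j, i ≠ j ∧ W i j ≠ 0 := by
    rw [Matrix.IsDiag, Pairwise] at hWd
    push_neg at hWd
    exact hWd
  have hWji : W j i = W i j := by
    have := congrFun (congrFun hW j) i
    simpa [Matrix.transpose_apply] using this.symm
  have key : ∀ x y : ℝ, deriv σ x = deriv σ y := by
    intro x y
    set v : Fin n → ℝ := Function.update (Function.update (fun _ => 0) i y) j x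
    have hvj : v j = x := Function.update_self _ _ _
    have hvi : v i = y := by
      simp [v, Function.update_of_ne hij]
    have := hsym v i j
    rw [hvj, hvi, hWji] at this
    exact mul_left_cancel₀ hWij this
  set c := deriv σ 0 with hc
  have hconst : ∀ x, deriv σ x = c := fun x => key x 0
  refine ⟨⟨c, hconst⟩, c, σ 0, ?_⟩
  intro x
  have h1 : ∀ y : ℝ, deriv (fun t => σ t - c * t) y = 0 := by
    intro y
    rw [deriv_fun_sub (hσ y) (by fun_prop), hconst, deriv_const_mul _ differentiable_id.differentiableAt]
    simp
  have h2 : (fun t => σ t - c * t) x = (fun t => σ t - c * t) 0 := by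
    exact is_const_of_deriv_eq_zero (hσ.sub (by fun_prop)) h1 x 0
  simp only [mul_zero, sub_zero] at h2
  linarith [h2]
end

section
/- Let n ≥ 2, μ ∈ ℝ, h ∈ ℝⁿ, let W ∈ ℝ^{n×n} be a symmetric matrix which is not diagonal, and let σ : ℝ → ℝ be continuously differentiable. Then the following are equivalent: (i) there exists a twice continuously differentiable J : ℝⁿ → ℝ such that the Wilson–Cowan vector field F(v) = −μ v + W σ(v) + h satisfies F(v) = −∇J(v) for all v ∈ ℝⁿ; (ii) σ is affine, i.e. there exist α, β ∈ ℝ with σ(x) = α x + β for all x ∈ ℝ. -/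
noncomputable section

lemma gradient_apply_coord {n : ℕ} (J : EuclideanSpace ℝ (Fin n) → ℝ) (v : EuclideanSpace ℝ (Fin n))
    (i : Fin n) :
    gradient J v i = fderiv ℝ J v (EuclideanSpace.single i 1) := by
  have h1 : (inner ℝ (gradient J v) (EuclideanSpace.single i (1:ℝ)) : ℝ)
      = fderiv ℝ J v (EuclideanSpace.single i 1) := by
    rw [gradient]
    exact InnerProductSpace.toDual_symm_apply
  rw [← h1, EuclideanSpace.inner_single_right]
  simp

lemma backward {n : ℕ} (μ : ℝ) (h : Fin n → ℝ)
    (W : Matrix (Fin n) (Fin n) ℝ) (hW : W.IsSymm)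
    (σ : ℝ → ℝ) (α β : ℝ) (hσ : ∀ x, σ x = α * x + β) :
    ∃ J : EuclideanSpace ℝ (Fin n) → ℝ, ContDiff ℝ 2 J ∧
      ∀ (v : EuclideanSpace ℝ (Fin n)) (i : Fin n),
        -(μ * v i) + (∑ k, W i k * σ (v k)) + h i = -(gradient J v i) := by
  classical
  set c : Fin n → ℝ := fun i => β * (∑ k, W i k) + h i with hc
  set proj : Fin n → EuclideanSpace ℝ (Fin n) →L[ℝ] ℝ := fun i => EuclideanSpace.proj i with hproj
  set J : EuclideanSpace ℝ (Fin n) → ℝ := fun v =>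
    (μ / 2 * ∑ i, v i * v i - α / 2 * ∑ i, ∑ k, W i k * (v i * v k)) - ∑ i, c i * v i with hJ
  set L : EuclideanSpace ℝ (Fin n) → (EuclideanSpace ℝ (Fin n) →L[ℝ] ℝ) := fun v =>
    ((μ / 2) • (∑ i, (v i • proj i + v i • proj i))
      - (α / 2) • (∑ i, ∑ k, W i k • (v i • proj k + v k • proj i)))
      - (∑ i, c i • proj i) with hL
  have hfd : ∀ v, HasFDerivAt J (L v) v := by
    intro v
    have hco : ∀ i : Fin n, HasFDerivAt (fun v : EuclideanSpace ℝ (Fin n) => v i) (proj i) v :=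
      fun i => (proj i).hasFDerivAt
    have h1 : HasFDerivAt (fun v : EuclideanSpace ℝ (Fin n) => ∑ i, v i * v i)
        (∑ i, (v i • proj i + v i • proj i)) v :=
      HasFDerivAt.fun_sum fun i _ => (hco i).mul (hco i)
    have h2 : HasFDerivAt (fun v : EuclideanSpace ℝ (Fin n) => ∑ i, ∑ k, W i k * (v i * v k))
        (∑ i, ∑ k, W i k • (v i • proj k + v k • proj i)) v :=
      HasFDerivAt.fun_sum fun i _ => HasFDerivAt.fun_sum fun k _ =>
        HasFDerivAt.const_mul ((hco i).mul (hco k)) (W i k)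
    have h3 : HasFDerivAt (fun v : EuclideanSpace ℝ (Fin n) => ∑ i, c i * v i)
        (∑ i, c i • proj i) v :=
      HasFDerivAt.fun_sum fun i _ => HasFDerivAt.const_mul (hco i) (c i)
    exact ((h1.const_mul (μ / 2)).sub (h2.const_mul (α / 2))).sub h3
  have hsym : ∀ a b, W a b = W b a := fun a b => (Matrix.IsSymm.apply hW a b).symm
  have hLapp : ∀ v (i : Fin n), L v (EuclideanSpace.single i 1)
      = μ * v i - α * (∑ k, W i k * v k) - c i := by
    intro v i
    have hps : ∀ (k j : Fin n), proj k (EuclideanSpace.single j (1:ℝ)) = if k = j then 1 else 0 := by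
      intro k j
      simp [hproj, EuclideanSpace.single_apply, eq_comm]
    simp only [hL, ContinuousLinearMap.sub_apply, ContinuousLinearMap.smul_apply,
      ContinuousLinearMap.sum_apply, ContinuousLinearMap.add_apply, hps, smul_eq_mul,
      mul_ite, mul_one, mul_zero, mul_add, Finset.sum_add_distrib, Finset.sum_ite_eq',
      Finset.mem_univ, if_true]
    have h1 : (∑ x : Fin n, ∑ x_1 : Fin n, if x = i then W x x_1 * v x_1 else 0)
        = ∑ k, W i k * v k := by
      rw [Finset.sum_congr rfl (fun x _ => by
        split <;> simp : ∀ x ∈ Finset.univ, (∑ x_1 : Fin n, if x = i then W x x_1 * v x_1 else 0)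
          = if x = i then ∑ x_1 : Fin n, W x x_1 * v x_1 else 0)]
      simp
    have h2 : (∑ x : Fin n, W x i * v x) = ∑ x : Fin n, W i x * v x :=
      Finset.sum_congr rfl fun x _ => by rw [hsym x i]
    rw [h1, h2]
    ring
  have hcd : ContDiff ℝ 2 J := by
    rw [hJ]
    have hci : ∀ i : Fin n, ContDiff ℝ 2 (fun v : EuclideanSpace ℝ (Fin n) => v i) :=
      fun i => (proj i).contDiff
    exact ((contDiff_const.mul (ContDiff.sum fun i _ => (hci i).mul (hci i))).sub
      (contDiff_const.mul (ContDiff.sum fun i _ => ContDiff.sum fun k _ =>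
        (contDiff_const.mul ((hci i).mul (hci k)))))).sub
      (ContDiff.sum fun i _ => contDiff_const.mul (hci i))
  refine ⟨J, hcd, fun v i => ?_⟩
  have hg : gradient J v i = μ * v i - α * (∑ k, W i k * v k) - c i := by
    rw [gradient_apply_coord, (hfd v).fderiv, hLapp]
  rw [hg, Finset.sum_congr rfl (fun k _ => by rw [hσ (v k)] : ∀ k ∈ Finset.univ,
    W i k * σ (v k) = W i k * (α * v k + β))]
  have : (∑ k, W i k * (α * v k + β)) = α * (∑ k, W i k * v k) + β * ∑ k, W i k := by
    rw [Finset.mul_sum, Finset.mul_sum, ← Finset.sum_add_distrib]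
    exact Finset.sum_congr rfl fun k _ => by ring
  rw [this, hc]
  ring

lemma forward {n : ℕ} (μ : ℝ) (h : Fin n → ℝ)
    (W : Matrix (Fin n) (Fin n) ℝ) (hW : W.IsSymm)
    (σ : ℝ → ℝ) (hσ : ContDiff ℝ 1 σ) (i j : Fin n) (hij : i ≠ j) (hW0 : W i j ≠ 0)
    (J : EuclideanSpace ℝ (Fin n) → ℝ) (hJ : ContDiff ℝ 2 J)
    (hF : ∀ (v : EuclideanSpace ℝ (Fin n)) (i : Fin n),
        -(μ * v i) + (∑ k, W i k * σ (v k)) + h i = -(gradient J v i)) :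
    ∃ α β : ℝ, ∀ x : ℝ, σ x = α * x + β := by
  classical
  set d : ℝ → ℝ := deriv σ with hd
  have hsym : ∀ a b, W a b = W b a := fun a b => (Matrix.IsSymm.apply hW a b).symm
  have hσdiff : Differentiable ℝ σ := hσ.differentiable one_ne_zero
  set proj : Fin n → EuclideanSpace ℝ (Fin n) →L[ℝ] ℝ := fun i => EuclideanSpace.proj i with hproj
  have hA : ∀ (r : Fin n) (y : EuclideanSpace ℝ (Fin n)),
      fderiv ℝ J y (EuclideanSpace.single r 1) = μ * y r - ∑ k, W r k * σ (y k) - h r := by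
    intro r y
    have := hF y r
    rw [gradient_apply_coord] at this
    linarith
  have hdiffJ : ∀ y, HasFDerivAt J (fderiv ℝ J y) y :=
    fun y => ((hJ.differentiable (by norm_num)) y).hasFDerivAt
  have hJ' : ContDiff ℝ 1 (fderiv ℝ J) := hJ.fderiv_right (by norm_num)
  have key : ∀ (v : EuclideanSpace ℝ (Fin n)) (p q : Fin n), p ≠ q →
      W p q * d (v q) = W q p * d (v p) := by
    intro v p q hpq
    have hD : HasFDerivAt (fderiv ℝ J) (fderiv ℝ (fderiv ℝ J) v) v :=
      ((hJ'.differentiable one_ne_zero) v).hasFDerivAt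
    set f'' := fderiv ℝ (fderiv ℝ J) v with hf''
    have hsymm : ∀ a b, f'' a b = f'' b a := second_derivative_symmetric hdiffJ hD
    have hEval : ∀ r q : Fin n, f'' (EuclideanSpace.single q 1) (EuclideanSpace.single r 1)
        = (if r = q then μ else 0) - W r q * d (v q) := by
      intro r q
      have hcomp : HasFDerivAt (fun y => fderiv ℝ J y (EuclideanSpace.single r 1))
          ((ContinuousLinearMap.apply ℝ ℝ (EuclideanSpace.single r (1:ℝ))).comp f'') v :=
        (ContinuousLinearMap.apply ℝ ℝ (EuclideanSpace.single r (1:ℝ))).hasFDerivAt.comp v hD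
      have hcomp' : HasFDerivAt
          (fun y : EuclideanSpace ℝ (Fin n) => μ * y r - ∑ k, W r k * σ (y k) - h r)
          ((ContinuousLinearMap.apply ℝ ℝ (EuclideanSpace.single r (1:ℝ))).comp f'') v := by
        have : (fun y => fderiv ℝ J y (EuclideanSpace.single r 1))
            = fun y : EuclideanSpace ℝ (Fin n) => μ * y r - ∑ k, W r k * σ (y k) - h r :=
          funext fun y => hA r y
        rwa [this] at hcomp
      have hR : HasFDerivAt
          (fun y : EuclideanSpace ℝ (Fin n) => μ * y r - ∑ k, W r k * σ (y k) - h r)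
          ((μ • proj r - ∑ k, W r k • (d (v k) • proj k)) : _) v := by
        have h1 : HasFDerivAt (fun y : EuclideanSpace ℝ (Fin n) => μ * y r) (μ • proj r) v :=
          ((proj r).hasFDerivAt).const_mul μ
        have h2 : HasFDerivAt (fun y : EuclideanSpace ℝ (Fin n) => ∑ k, W r k * σ (y k))
            (∑ k, W r k • (d (v k) • proj k)) v :=
          HasFDerivAt.fun_sum fun k _ =>
            (((hσdiff (v k)).hasDerivAt.comp_hasFDerivAt v (proj k).hasFDerivAt).const_mul (W r k))
        exact (h1.sub h2).sub_const (h r)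
      have huniq := hcomp'.unique hR
      have := congrArg (fun (L : EuclideanSpace ℝ (Fin n) →L[ℝ] ℝ) =>
        L (EuclideanSpace.single q 1)) huniq
      simp only [ContinuousLinearMap.comp_apply, ContinuousLinearMap.apply_apply,
        ContinuousLinearMap.sub_apply, ContinuousLinearMap.smul_apply,
        ContinuousLinearMap.sum_apply, smul_eq_mul] at this
      rw [this]
      have hps : ∀ (k q : Fin n), proj k (EuclideanSpace.single q (1:ℝ)) = if k = q then 1 else 0 := by
        intro k q; simp [hproj, EuclideanSpace.single_apply, eq_comm]
      simp only [hps, mul_ite, mul_one, mul_zero, Finset.sum_ite_eq', Finset.mem_univ, if_true]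
    have e1 := hEval p q
    have e2 := hEval q p
    rw [hsymm (EuclideanSpace.single q 1) (EuclideanSpace.single p 1)] at e1
    rw [e2, if_neg (Ne.symm hpq), if_neg hpq] at e1
    linarith
  have hdconst : ∀ a b : ℝ, d a = d b := by
    intro a b
    set v : EuclideanSpace ℝ (Fin n) :=
      EuclideanSpace.single i a + EuclideanSpace.single j b with hv
    have hvi : v i = a := by simp [hv, EuclideanSpace.single_apply, Ne.symm hij, hij]
    have hvj : v j = b := by simp [hv, EuclideanSpace.single_apply, Ne.symm hij, hij]
    have := key v i j hij
    rw [hvi, hvj, hsym j i] at this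
    exact (mul_left_cancel₀ hW0 this).symm
  refine ⟨d 0, σ 0, fun x => ?_⟩
  set g : ℝ → ℝ := fun x => σ x - d 0 * x with hg
  have hgdiff : Differentiable ℝ g := hσdiff.sub (differentiable_id.const_mul (d 0))
  have hgderiv : ∀ x, deriv g x = 0 := by
    intro x
    have h1 : HasDerivAt g (d x - d 0 * 1) x :=
      (hσdiff x).hasDerivAt.sub ((hasDerivAt_id x).const_mul (d 0))
    have h2 : d x - d 0 * 1 = 0 := by rw [hdconst x 0]; ring
    rw [h1.deriv, h2]
  have := is_const_of_deriv_eq_zero hgdiff hgderiv x 0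
  simp only [hg] at this
  linarith [this]

/-- **Characterization of variational Wilson–Cowan dynamics.**
For `n ≥ 2`, `W` symmetric and not diagonal, and `σ ∈ C¹`, the Wilson–Cowan
vector field `F(v) = -μ v + W σ(v) + h` is the negative gradient of some
`C²` functional `J` if and only if `σ` is affine. -/
theorem wilsonCowan_variational_iff_affine
    (n : ℕ) (hn : 2 ≤ n) (μ : ℝ) (h : Fin n → ℝ)
    (W : Matrix (Fin n) (Fin n) ℝ) (hW : W.IsSymm) (hWd : ¬ W.IsDiag)
    (σ : ℝ → ℝ) (hσ : ContDiff ℝ 1 σ) :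
    (∃ J : EuclideanSpace ℝ (Fin n) → ℝ, ContDiff ℝ 2 J ∧
      ∀ (v : EuclideanSpace ℝ (Fin n)) (i : Fin n),
        -(μ * v i) + (∑ k, W i k * σ (v k)) + h i = -(gradient J v i)) ↔
    ∃ α β : ℝ, ∀ x : ℝ, σ x = α * x + β := by
  obtain ⟨i, j, hij, hW0⟩ : ∃ i j, i ≠ j ∧ W i j ≠ 0 := by
    by_contra h'
    push_neg at h'
    exact hWd fun i j hij => by
      by_contra h''
      exact h'' (h' i j hij)
  constructor
  · rintro ⟨J, hJ, hF⟩
    exact forward μ h W hW σ hσ i j hij hW0 J hJ hF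
  · rintro ⟨α, β, hab⟩
    exact backward μ h W hW σ α β hab

end
end

section
/- Let n ≥ 1, μ ∈ ℝ, h ∈ ℝⁿ, let W ∈ ℝ^{n×n} be a symmetric matrix, let σ : ℝ → ℝ be a continuous odd function, and let Σ : ℝ → ℝ be an antiderivative of σ (Σ′ = σ on ℝ). Define J : ℝⁿ → ℝ by J(v) = (μ/2)‖v‖² − (1/2) Σ_{k,ℓ=1}^{n} W_{kℓ} Σ(vₖ − v_ℓ) − ⟨h, v⟩. Then J is differentiable and the finite-dimensional LHE vector field F(v), with components Fᵢ(v) = −μ vᵢ + Σ_{ℓ=1}^{n} W_{iℓ} σ(vᵢ − v_ℓ) + hᵢ, satisfies F(v) = −∇J(v) for every v ∈ ℝⁿ; i.e. the finite-dimensional LHE equation dv/dt = F(v) is the gradient descent of the energy J. -/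
open InnerProductSpace

/-- **The finite-dimensional LHE equation is a gradient descent.**
For symmetric `W`, continuous odd `σ` with antiderivative `Σ` (here `Sig`), the
energy `J(v) = (μ/2)‖v‖² - (1/2)∑ₖ∑ₗ W k ℓ * Σ(vₖ - vₗ) - ⟨h, v⟩` is
differentiable and the LHE vector field
`Fᵢ(v) = -μ vᵢ + ∑ₗ W i ℓ * σ(vᵢ - vₗ) + hᵢ` satisfies `F = -∇J`. -/
theorem lhe_is_gradient_descent
    (n : ℕ) (hn : 1 ≤ n) (μ : ℝ) (h : Fin n → ℝ)
    (W : Matrix (Fin n) (Fin n) ℝ) (hW : W.IsSymm)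
    (σ : ℝ → ℝ) (hσ : Continuous σ) (hodd : ∀ x : ℝ, σ (-x) = -σ x)
    (Sig : ℝ → ℝ) (hSig : ∀ x : ℝ, HasDerivAt Sig (σ x) x)
    (J : EuclideanSpace ℝ (Fin n) → ℝ)
    (hJ : ∀ v : EuclideanSpace ℝ (Fin n),
      J v = μ / 2 * (∑ i, (v i) ^ 2)
        - 1 / 2 * (∑ k, ∑ ℓ, W k ℓ * Sig (v k - v ℓ))
        - ∑ i, h i * v i) :
    Differentiable ℝ J ∧
      ∀ (v : EuclideanSpace ℝ (Fin n)) (i : Fin n),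
        -(μ * v i) + (∑ ℓ, W i ℓ * σ (v i - v ℓ)) + h i = -(gradient J v i) := by
  classical
  -- the claimed gradient
  set g : EuclideanSpace ℝ (Fin n) → EuclideanSpace ℝ (Fin n) :=
    fun v => WithLp.toLp 2 (fun i => μ * v i - (∑ ℓ, W i ℓ * σ (v i - v ℓ)) - h i) with hg
  have hJfun : J = fun v => μ / 2 * (∑ i, (v i) ^ 2)
        - 1 / 2 * (∑ k, ∑ ℓ, W k ℓ * Sig (v k - v ℓ))
        - ∑ i, h i * v i := funext hJ
  have key : ∀ v : EuclideanSpace ℝ (Fin n), HasGradientAt J (g v) v := by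
    intro v
    -- derivative of the quadratic part
    have h1 : HasFDerivAt (fun v : EuclideanSpace ℝ (Fin n) => ∑ i, (v i) ^ 2)
        (∑ i, (2 * v i) • (EuclideanSpace.proj i : EuclideanSpace ℝ (Fin n) →L[ℝ] ℝ)) v := by
      apply HasFDerivAt.fun_sum
      intro i _
      have := (hasDerivAt_pow 2 (v i)).comp_hasFDerivAt v
        ((EuclideanSpace.proj i : EuclideanSpace ℝ (Fin n) →L[ℝ] ℝ).hasFDerivAt (x := v))
      exact this.congr_fderiv (by simp)
    -- derivative of the interaction part
    have h2 : HasFDerivAt (fun v : EuclideanSpace ℝ (Fin n) =>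
        ∑ k, ∑ ℓ, W k ℓ * Sig (v k - v ℓ))
        (∑ k, ∑ ℓ, (W k ℓ * σ (v k - v ℓ)) •
          ((EuclideanSpace.proj k : EuclideanSpace ℝ (Fin n) →L[ℝ] ℝ)
            - EuclideanSpace.proj ℓ)) v := by
      apply HasFDerivAt.fun_sum; intro k _
      apply HasFDerivAt.fun_sum; intro ℓ _
      have hlin : HasFDerivAt (fun v : EuclideanSpace ℝ (Fin n) => v k - v ℓ)
          ((EuclideanSpace.proj k : EuclideanSpace ℝ (Fin n) →L[ℝ] ℝ)
            - EuclideanSpace.proj ℓ) v := by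
        simpa using ((EuclideanSpace.proj k :
          EuclideanSpace ℝ (Fin n) →L[ℝ] ℝ) - EuclideanSpace.proj ℓ).hasFDerivAt (x := v)
      have hcomp := (hSig (v k - v ℓ)).comp_hasFDerivAt v hlin
      have := hcomp.const_mul (W k ℓ)
      simpa [smul_smul, mul_comm] using this
    -- derivative of the linear part
    have h3 : HasFDerivAt (fun v : EuclideanSpace ℝ (Fin n) => ∑ i, h i * v i)
        (∑ i, (h i) • (EuclideanSpace.proj i : EuclideanSpace ℝ (Fin n) →L[ℝ] ℝ)) v := by
      apply HasFDerivAt.fun_sum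
      intro i _
      simpa using ((EuclideanSpace.proj i :
        EuclideanSpace ℝ (Fin n) →L[ℝ] ℝ).hasFDerivAt (x := v)).const_mul (h i)
    have hF : HasFDerivAt J
        ((μ / 2) • (∑ i, (2 * v i) • (EuclideanSpace.proj i :
            EuclideanSpace ℝ (Fin n) →L[ℝ] ℝ))
          - ((1:ℝ) / 2) • (∑ k, ∑ ℓ, (W k ℓ * σ (v k - v ℓ)) •
              ((EuclideanSpace.proj k : EuclideanSpace ℝ (Fin n) →L[ℝ] ℝ)
                - EuclideanSpace.proj ℓ))
          - ∑ i, (h i) • (EuclideanSpace.proj i :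
            EuclideanSpace ℝ (Fin n) →L[ℝ] ℝ)) v := by
      rw [hJfun]
      exact ((h1.const_mul (μ / 2)).sub (h2.const_mul ((1:ℝ) / 2))).sub h3
    -- identify the Fréchet derivative with ⟪g v, ·⟫
    have hL : ((μ / 2) • (∑ i, (2 * v i) • (EuclideanSpace.proj i :
            EuclideanSpace ℝ (Fin n) →L[ℝ] ℝ))
          - ((1:ℝ) / 2) • (∑ k, ∑ ℓ, (W k ℓ * σ (v k - v ℓ)) •
              ((EuclideanSpace.proj k : EuclideanSpace ℝ (Fin n) →L[ℝ] ℝ)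
                - EuclideanSpace.proj ℓ))
          - ∑ i, (h i) • (EuclideanSpace.proj i :
            EuclideanSpace ℝ (Fin n) →L[ℝ] ℝ))
        = (toDual ℝ (EuclideanSpace ℝ (Fin n))) (g v) := by
      apply ContinuousLinearMap.ext
      intro w
      simp only [ContinuousLinearMap.sub_apply, ContinuousLinearMap.smul_apply,
        ContinuousLinearMap.sum_apply, PiLp.proj_apply, toDual_apply_apply,
        smul_eq_mul, hg, PiLp.toLp_apply]
      rw [PiLp.inner_apply]
      simp only [RCLike.inner_apply, conj_trivial]
      -- symmetry trick on the double sum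
      have hswap : (∑ k, ∑ ℓ, W k ℓ * σ (v k - v ℓ) * (w k - w ℓ))
          = 2 * ∑ k, (∑ ℓ, W k ℓ * σ (v k - v ℓ)) * w k := by
        have e1 : (∑ k, ∑ ℓ, W k ℓ * σ (v k - v ℓ) * w ℓ)
            = -∑ k, ∑ ℓ, W k ℓ * σ (v k - v ℓ) * w k := by
          rw [Finset.sum_comm]
          rw [← Finset.sum_neg_distrib]
          apply Finset.sum_congr rfl; intro k _
          rw [← Finset.sum_neg_distrib]
          apply Finset.sum_congr rfl; intro ℓ _
          have hWs : W ℓ k = W k ℓ := by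
            have := hW; rw [Matrix.IsSymm] at this
            have := congrArg (fun M => M k ℓ) this
            simpa [Matrix.transpose_apply] using this
          have : σ (v ℓ - v k) = -σ (v k - v ℓ) := by
            rw [← hodd]; ring_nf
          rw [hWs, this]; ring
        calc (∑ k, ∑ ℓ, W k ℓ * σ (v k - v ℓ) * (w k - w ℓ))
            = (∑ k, ∑ ℓ, W k ℓ * σ (v k - v ℓ) * w k)
              - ∑ k, ∑ ℓ, W k ℓ * σ (v k - v ℓ) * w ℓ := by
              rw [← Finset.sum_sub_distrib]
              apply Finset.sum_congr rfl; intro k _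
              rw [← Finset.sum_sub_distrib]
              apply Finset.sum_congr rfl; intro ℓ _; ring
          _ = 2 * ∑ k, (∑ ℓ, W k ℓ * σ (v k - v ℓ)) * w k := by
              rw [e1]
              simp only [Finset.sum_mul]
              ring
      have expand : ∀ k, (∑ ℓ, (W k ℓ * σ (v k - v ℓ)) * (w k - w ℓ))
          = ∑ ℓ, W k ℓ * σ (v k - v ℓ) * (w k - w ℓ) := fun k => rfl
      -- final algebra
      simp only [mul_comm (w _) _]
      rw [show (∑ i, (μ * v i - (∑ ℓ, W i ℓ * σ (v i - v ℓ)) - h i) * w i)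
          = μ * (∑ i, v i * w i) - (∑ i, (∑ ℓ, W i ℓ * σ (v i - v ℓ)) * w i)
            - ∑ i, h i * w i by
        simp only [Finset.mul_sum]
        rw [← Finset.sum_sub_distrib, ← Finset.sum_sub_distrib]
        apply Finset.sum_congr rfl; intro i _; ring]
      have : (∑ k, ∑ ℓ, W k ℓ * σ (v k - v ℓ) * (w k - w ℓ))
          = 2 * ∑ k, (∑ ℓ, W k ℓ * σ (v k - v ℓ)) * w k := hswap
      rw [show (∑ i, 2 * v i * w i) = 2 * ∑ i, v i * w i by
        rw [Finset.mul_sum]; apply Finset.sum_congr rfl; intro i _; ring]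
      rw [show (∑ k, ∑ ℓ, W k ℓ * σ (v k - v ℓ) * (w k - w ℓ))
            = 2 * ∑ k, (∑ ℓ, W k ℓ * σ (v k - v ℓ)) * w k from hswap]
      ring
    rw [hasGradientAt_iff_hasFDerivAt]
    rwa [hL] at hF
  refine ⟨fun v => (key v).hasFDerivAt.differentiableAt, ?_⟩
  intro v i
  rw [(key v).gradient]
  simp only [hg, PiLp.toLp_apply]
  ring
end
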